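/- The flow on the positive-energy infinity manifold is gradient-like with respect to ṽ (Proposition 5.1): along every solution of the infinity-manifold system, ṽ'(σ) = (1 − s̃(σ)²)·ũ(σ)² ≥ 0, so ṽ is non-decreasing; moreover, if the solution is non-constant then ṽ'(σ) > 0 for every σ, i.e. ṽ is strictly increasing along every non-equilibrium solution. -/

import Mathlib

open Real

/-- Forward Grönwall: a solution of the linear ODE `f' = c·f` on `[a,b]` that
vanishes at `a` vanishes identically. -/
lemma aux_zero_on_Icc (f c : ℝ → ℝ) (a b : ℝ)
    (hf : ∀ t ∈ Set.Icc a b, HasDerivAt f (c t * f t) t)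
    (hc : ContinuousOn c (Set.Icc a b))
    (h0 : f a = 0) : ∀ t ∈ Set.Icc a b, f t = 0 := by
  obtain ⟨K, hK⟩ := isCompact_Icc.exists_bound_of_continuousOn hc
  have hcont : ContinuousOn f (Set.Icc a b) := fun t ht =>
    (hf t ht).continuousAt.continuousWithinAt
  intro t ht
  have hb := norm_le_gronwallBound_of_norm_deriv_right_le
    (f := f) (f' := fun t => c t * f t) (δ := 0) (K := K) (ε := 0) (a := a) (b := b)
    hcont
    (fun t ht => (hf t (Set.mem_Icc_of_Ico ht)).hasDerivWithinAt)
    (by simp [h0])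
    (fun t ht => by
      have hKt := hK t (Set.mem_Icc_of_Ico ht)
      calc ‖c t * f t‖ = ‖c t‖ * ‖f t‖ := norm_mul _ _
        _ ≤ K * ‖f t‖ := mul_le_mul_of_nonneg_right hKt (norm_nonneg _)
        _ ≤ K * ‖f t‖ + 0 := by simp)
    t ht
  rw [gronwallBound_ε0_δ0] at hb
  simpa using le_antisymm hb (norm_nonneg _)

/-- Backward Grönwall: a solution of `f' = c·f` on `[a,b]` that vanishes at `b`
vanishes identically. -/
lemma aux_zero_on_Icc' (f c : ℝ → ℝ) (a b : ℝ)
    (hf : ∀ t ∈ Set.Icc a b, HasDerivAt f (c t * f t) t)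
    (hc : ContinuousOn c (Set.Icc a b))
    (h0 : f b = 0) : ∀ t ∈ Set.Icc a b, f t = 0 := by
  set φ : ℝ → ℝ := fun t => a + b - t with hφ
  have hφmem : ∀ t ∈ Set.Icc a b, φ t ∈ Set.Icc a b := by
    intro t ht
    exact ⟨by simp only [hφ]; linarith [ht.2], by simp only [hφ]; linarith [ht.1]⟩
  have hg : ∀ t ∈ Set.Icc a b, HasDerivAt (f ∘ φ) ((-(c (φ t))) * (f ∘ φ) t) t := by
    intro t ht
    have hφd : HasDerivAt φ (-1) t := by
      have h := (hasDerivAt_const t (a + b)).sub (hasDerivAt_id' t)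
      rw [zero_sub] at h
      exact h
    have := (hf (φ t) (hφmem t ht)).comp t hφd
    refine this.congr_deriv ?_
    simp [Function.comp]
  have hgc : ContinuousOn (fun t => -(c (φ t))) (Set.Icc a b) := by
    apply ContinuousOn.neg
    exact hc.comp ((continuous_const.sub continuous_id).continuousOn) hφmem
  have hg0 : (f ∘ φ) a = 0 := by
    simp only [Function.comp, hφ]
    simpa using h0
  have key := aux_zero_on_Icc (f ∘ φ) (fun t => -(c (φ t))) a b hg hgc hg0
  intro t ht
  have := key (φ t) (hφmem t ht)
  simpa [Function.comp, hφ] using this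

/-- A function with zero derivative on an order-connected set is constant. -/
lemma aux_const_on (f : ℝ → ℝ) (I : Set ℝ) (hI : I.OrdConnected)
    (hf : ∀ t ∈ I, HasDerivAt f 0 t) : ∀ x ∈ I, ∀ y ∈ I, f x = f y := by
  have key : ∀ x ∈ I, ∀ y ∈ I, x ≤ y → f y = f x := by
    intro x hx y hy hxy
    have hsub : Set.Icc x y ⊆ I := hI.out hx hy
    exact constant_of_has_deriv_right_zero
      (fun t ht => (hf t (hsub ht)).continuousAt.continuousWithinAt)
      (fun t ht => (hf t (hsub (Set.mem_Icc_of_Ico ht))).hasDerivWithinAt)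
      y (Set.right_mem_Icc.2 hxy)
  intro x hx y hy
  rcases le_total x y with h | h
  · exact (key x hx y hy h).symm
  · exact key y hy x hx h

/-- The flow on the positive-energy infinity manifold is
gradient-like with respect to `ṽ`: along every solution `ṽ' = (1 − s̃²)ũ² ≥ 0`,
so `ṽ` is non-decreasing, and along every non-constant solution `ṽ' > 0`
everywhere. -/
theorem infinity_manifold_gradientlike
    (lam : ℝ) (hlam : 0 < lam)
    (I : Set ℝ) (hI : I.OrdConnected)
    (v s u : ℝ → ℝ)
    (hrange : ∀ σ ∈ I, s σ ∈ Set.Icc (-1 : ℝ) 1)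
    (hv : ∀ σ ∈ I, HasDerivAt v ((1 - s σ ^ 2) * u σ ^ 2) σ)
    (hs : ∀ σ ∈ I, HasDerivAt s ((1 / lam) * (1 - s σ ^ 2) * u σ) σ)
    (hu : ∀ σ ∈ I, HasDerivAt u (-((1 - s σ ^ 2) * u σ * v σ)) σ) :
    (∀ σ ∈ I, 0 ≤ (1 - s σ ^ 2) * u σ ^ 2) ∧
    MonotoneOn v I ∧
    ((¬ ∀ σ₁ ∈ I, ∀ σ₂ ∈ I,
        v σ₁ = v σ₂ ∧ s σ₁ = s σ₂ ∧ u σ₁ = u σ₂) →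
      ∀ σ ∈ I, 0 < (1 - s σ ^ 2) * u σ ^ 2) := by
  have hnn : ∀ σ ∈ I, 0 ≤ (1 - s σ ^ 2) * u σ ^ 2 := by
    intro σ hσ
    obtain ⟨h1, h2⟩ := hrange σ hσ
    have hs2 : 0 ≤ 1 - s σ ^ 2 := by nlinarith
    positivity
  refine ⟨hnn, ?_, ?_⟩
  · -- Monotone
    intro x hx y hy hxy
    have hsub : Set.Icc x y ⊆ I := hI.out hx hy
    have hmono : MonotoneOn v (Set.Icc x y) := by
      apply monotoneOn_of_deriv_nonneg (convex_Icc x y)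
      · exact fun t ht => (hv t (hsub ht)).continuousAt.continuousWithinAt
      · intro t ht
        rw [interior_Icc] at ht
        exact ((hv t (hsub (Set.mem_Icc_of_Ioo ht))).differentiableAt).differentiableWithinAt
      · intro t ht
        rw [interior_Icc] at ht
        have hmem := hsub (Set.mem_Icc_of_Ioo ht)
        rw [(hv t hmem).deriv]
        exact hnn t hmem
    exact hmono (Set.left_mem_Icc.2 hxy) (Set.right_mem_Icc.2 hxy) hxy
  · -- Strict positivity for non-constant solutions
    intro hne σ hσ
    by_contra hle
    have hF0 : (1 - s σ ^ 2) * u σ ^ 2 = 0 :=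
      le_antisymm (not_lt.1 hle) (hnn σ hσ)
    exfalso; apply hne
    -- set up the linear ODE for F = (1-s²)u²
    set F : ℝ → ℝ := fun t => (1 - s t ^ 2) * u t ^ 2 with hFdef
    set c : ℝ → ℝ := fun t => -((2 / lam) * s t * u t) - 2 * (1 - s t ^ 2) * v t with hcdef
    have hF : ∀ t ∈ I, HasDerivAt F (c t * F t) t := by
      intro t ht
      have h1 : HasDerivAt (fun x => 1 - s x ^ 2)
          (0 - 2 * s t ^ 1 * ((1 / lam) * (1 - s t ^ 2) * u t)) t :=
        (hasDerivAt_const t 1).sub ((hs t ht).pow 2)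
      have h2 : HasDerivAt (fun x => u x ^ 2)
          (2 * u t ^ 1 * (-((1 - s t ^ 2) * u t * v t))) t := (hu t ht).pow 2
      have := h1.mul h2
      refine this.congr_deriv ?_
      simp only [hcdef, hFdef]
      ring
    have hcC : ContinuousOn c I := by
      intro t ht
      have hsC := (hs t ht).continuousAt.continuousWithinAt (s := I)
      have huC := (hu t ht).continuousAt.continuousWithinAt (s := I)
      have hvC := (hv t ht).continuousAt.continuousWithinAt (s := I)
      exact (((continuousWithinAt_const.mul hsC).mul huC).neg).sub
        ((continuousWithinAt_const.mul
          (continuousWithinAt_const.sub (hsC.pow 2))).mul hvC)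
    -- F vanishes identically on I
    have hFzero : ∀ t ∈ I, F t = 0 := by
      intro t ht
      rcases le_total σ t with h | h
      · have hsub : Set.Icc σ t ⊆ I := hI.out hσ ht
        exact aux_zero_on_Icc F c σ t (fun x hx => hF x (hsub hx))
          (hcC.mono hsub) hF0 t (Set.right_mem_Icc.2 h)
      · have hsub : Set.Icc t σ ⊆ I := hI.out ht hσ
        exact aux_zero_on_Icc' F c t σ (fun x hx => hF x (hsub hx))
          (hcC.mono hsub) hF0 t (Set.left_mem_Icc.2 h)
    -- hence (1-s²)u vanishes identically on I
    have hsu : ∀ t ∈ I, (1 - s t ^ 2) * u t = 0 := by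
      intro t ht
      have hsq : ((1 - s t ^ 2) * u t) ^ 2 = (1 - s t ^ 2) * F t := by
        simp only [hFdef]; ring
      have : ((1 - s t ^ 2) * u t) ^ 2 = 0 := by rw [hsq, hFzero t ht, mul_zero]
      exact sq_eq_zero_iff.mp this
    -- all three coordinates are constant
    have hvconst : ∀ x ∈ I, ∀ y ∈ I, v x = v y := by
      apply aux_const_on v I hI
      intro t ht
      have : (1 - s t ^ 2) * u t ^ 2 = 0 := hFzero t ht
      exact this ▸ hv t ht
    have hsconst : ∀ x ∈ I, ∀ y ∈ I, s x = s y := by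
      apply aux_const_on s I hI
      intro t ht
      have h0 : (1 / lam) * (1 - s t ^ 2) * u t = 0 := by
        rw [mul_assoc, hsu t ht, mul_zero]
      exact h0 ▸ hs t ht
    have huconst : ∀ x ∈ I, ∀ y ∈ I, u x = u y := by
      apply aux_const_on u I hI
      intro t ht
      have h0 : -((1 - s t ^ 2) * u t * v t) = 0 := by
        rw [hsu t ht, zero_mul, neg_zero]
      exact h0 ▸ hu t ht
    intro σ₁ h₁ σ₂ h₂
    exact ⟨hvconst σ₁ h₁ σ₂ h₂, hsconst σ₁ h₁ σ₂ h₂, huconst σ₁ h₁ σ₂ h₂⟩
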